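/- arXiv:2512.07418 — 2 statements merged into one kernel-verified Lean document; each statement's English description precedes it below -/
import Mathlib

section
/- Let M be a Riemannian manifold with boundary ∂M, N the inner unit normal, S the shape operator S(X) = −∇_X N, and ω a smooth p-form on M. Then along ∂M, for any vector field X tangent to ∂M: ∇^{∂M}_X (J*ω) = J*(∇_X ω) + (S(X))^* ∧ i_N ω, where (S(X))^* is the 1-form dual to S(X). -/
open Finset Function

/-- Differential `p`-forms on a manifold `M`, modeled synthetically as `C`-valued functions on
`p`-tuples of vector fields, where the commutative ring `C` plays the role of `C^∞(M)` and
`Vec` the `C`-module of vector fields. -/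
abbrev Form (Vec C : Type*) (p : ℕ) := (Fin p → Vec) → C

/-- Interior product `i_X ω`. -/
def iProd {Vec C : Type*} [CommRing C] : ∀ {p : ℕ}, Vec → Form Vec C p → Form Vec C (p - 1)
  | 0, _, _ => 0
  | _ + 1, X, ω => fun Y => ω (Fin.cons X Y)

/-- Covariant derivative `∇_X ω` of a `p`-form, where `act X u` is the derivative `X(u)` of the
function `u` along `X` and `conn X Y = ∇_X Y` is the Levi-Civita connection. -/
def covD {Vec C : Type*} [CommRing C] (act : Vec → C → C) (conn : Vec → Vec → Vec) {p : ℕ}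
    (X : Vec) (ω : Form Vec C p) : Form Vec C p :=
  fun Y => act X (ω Y) - ∑ i, ω (Function.update Y i (conn X (Y i)))

/-- The derivation extension `T^{[p]}` of a `(1,1)`-tensor `T` to `p`-forms:
`(T^{[p]}ω)(X_1,…,X_p) = Σ_α ω(X_1,…,T(X_α),…,X_p)`. -/
def derext {Vec C : Type*} [CommRing C] (T : Vec → Vec) {p : ℕ} (ω : Form Vec C p) :
    Form Vec C p :=
  fun Y => ∑ i, ω (Function.update Y i (T (Y i)))

/-- Exterior derivative, via the torsion-free connection:
`dω(X_0,…,X_p) = Σ_i (-1)^i (∇_{X_i}ω)(X_0,…,X̂_i,…,X_p)`. -/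
def extD {Vec C : Type*} [CommRing C] (act : Vec → C → C) (conn : Vec → Vec → Vec) {p : ℕ}
    (ω : Form Vec C p) : Form Vec C (p + 1) :=
  fun Y => ∑ i : Fin (p + 1),
    (-1 : C) ^ (i : ℕ) * covD act conn (Y i) ω (fun j => Y (i.succAbove j))

/-- Wedge product `θ ∧ ω` of a `1`-form `θ` with a `p`-form `ω`. -/
def oneWedge {Vec C : Type*} [CommRing C] (θ : Vec → C) {p : ℕ} (ω : Form Vec C p) :
    Form Vec C (p + 1) :=
  fun Y => ∑ i : Fin (p + 1),
    (-1 : C) ^ (i : ℕ) * θ (Y i) * ω (fun j => Y (i.succAbove j))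

/-- Interior product `i_X ω` for forms of positive degree. -/
def iProdS {Vec C : Type*} [CommRing C] {p : ℕ} (X : Vec) (ω : Form Vec C (p + 1)) :
    Form Vec C p :=
  fun Y => ω (Fin.cons X Y)

/-- Restriction `J*ω` of a `p`-form on `M` to the boundary, where `ins` is the inclusion of
the module `VecB` of vector fields tangent to `∂M` into the ambient vector fields. -/
def Jstar {C : Type*} [CommRing C] {Vec VecB : Type*} [AddCommGroup Vec] [Module C Vec]
    [AddCommGroup VecB] [Module C VecB] (ins : VecB →ₗ[C] Vec) {p : ℕ}
    (ω : Form Vec C p) : Form VecB C p :=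
  fun Y => ω fun j => ins (Y j)

/-- The boundary `(p)`-form `i_N ω` obtained from an ambient `(p+1)`-form `ω` by inserting
the inner unit normal `N` and restricting to the boundary. -/
def iNres {C : Type*} [CommRing C] {Vec VecB : Type*} [AddCommGroup Vec] [Module C Vec]
    [AddCommGroup VecB] [Module C VecB] (ins : VecB →ₗ[C] Vec) (N : Vec) {p : ℕ}
    (ω : Form Vec C (p + 1)) : Form VecB C p :=
  fun Y => ω (Fin.cons N fun j => ins (Y j))


private lemma stmt10_key {C : Type*} [CommRing C] {Vec : Type*} [AddCommGroup Vec] [Module C Vec]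
    {p : ℕ} (ω : Form Vec C (p + 1))
    (hMulti : ∀ (Y : Fin (p + 1) → Vec) (i : Fin (p + 1)) (a b : Vec) (c : C),
      ω (Function.update Y i (a + c • b))
        = ω (Function.update Y i a) + c * ω (Function.update Y i b))
    (hAlt : ∀ (Y : Fin (p + 1) → Vec) (i j : Fin (p + 1)), i ≠ j → Y i = Y j → ω Y = 0)
    (N : Vec) (Z : Fin (p+1) → Vec) (i : Fin (p+1)) :
    ω (Function.update Z i N) = (-1)^(i:ℕ) * ω (Fin.cons N fun j => Z (i.succAbove j)) := by
  classical
  have hzero : ∀ (Z : Fin (p+1) → Vec) (i : Fin (p+1)), ω (Function.update Z i 0) = 0 := by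
    intro Z i
    have h := hMulti Z i 0 0 1
    simp only [one_smul, add_zero, one_mul] at h
    linear_combination -h
  have hsmul : ∀ (Z : Fin (p+1) → Vec) (i : Fin (p+1)) (c : C) (b : Vec),
      ω (Function.update Z i (c • b)) = c * ω (Function.update Z i b) := by
    intro Z i c b
    have h := hMulti Z i 0 b c
    rw [zero_add, hzero] at h
    rw [h, zero_add]
  have hadd : ∀ (Z : Fin (p+1) → Vec) (i : Fin (p+1)) (a b : Vec),
      ω (Function.update Z i (a + b)) = ω (Function.update Z i a) + ω (Function.update Z i b) := by
    intro Z i a b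
    have h := hMulti Z i a b 1
    rwa [one_smul, one_mul] at h
  let F : MultilinearMap C (fun _ : Fin (p+1) => Vec) C :=
    { toFun := ω
      map_update_add' := by
        intro inst v i x y
        have : inst = instDecidableEqFin (p+1) := Subsingleton.elim _ _
        subst this
        exact hadd v i x y
      map_update_smul' := by
        intro inst v i c x
        have : inst = instDecidableEqFin (p+1) := Subsingleton.elim _ _
        subst this
        simpa [smul_eq_mul] using hsmul v i c x }
  let f : Vec [⋀^Fin (p+1)]→ₗ[C] C := ⟨F, fun v i j hv hij => hAlt v i j hij hv⟩
  have hfv : ∀ v, f v = ω v := fun v => rfl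
  have hperm := f.map_perm (Function.update Z i N) (Fin.cycleRange i).symm
  have hcomp : (Function.update Z i N) ∘ ⇑(Fin.cycleRange i).symm
      = Fin.cons N fun j => Z (i.succAbove j) := by
    funext k
    refine Fin.cases ?_ ?_ k
    · rw [Function.comp_apply, Fin.cycleRange_symm_zero, Function.update_self, Fin.cons_zero]
    · intro j
      rw [Function.comp_apply, Fin.cycleRange_symm_succ,
        Function.update_of_ne (Fin.succAbove_ne i j), Fin.cons_succ]
  rw [hcomp] at hperm
  have hsign : Equiv.Perm.sign (Fin.cycleRange i).symm = (-1)^(i:ℕ) := by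
    rw [Equiv.Perm.sign_symm, Fin.sign_cycleRange]
  rw [hsign] at hperm
  rw [hfv, hfv] at hperm
  have h2 : ω (Function.update Z i N)
      = ((-1:ℤˣ)^(i:ℕ)) • ω (Fin.cons N fun j => Z (i.succAbove j)) := by
    rw [hperm, smul_smul, ← mul_pow]
    simp
  rw [h2, Units.smul_def]
  push_cast
  simp [zsmul_eq_mul]

/-- Along `∂M`, for `X` tangent to `∂M`:
`∇^{∂M}_X (J*ω) = J*(∇_X ω) + (S X)^* ∧ i_N ω`, where `S` is the shape operator,
`(S X)^* = g(S X, ·)` its dual `1`-form, and the Gauss formula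
`∇_X Y = ∇^{∂M}_X Y + ⟨S X, Y⟩ N` holds.  `ω` is a smooth (multilinear, alternating)
`(p+1)`-form on `M`. -/
theorem stmt10 {C : Type*} [CommRing C] {Vec VecB : Type*} [AddCommGroup Vec] [Module C Vec]
    [AddCommGroup VecB] [Module C VecB]
    (act : Vec → C → C) (conn : Vec → Vec → Vec) (connB : VecB → VecB → VecB)
    (ins : VecB →ₗ[C] Vec) (N : Vec) (S : VecB → VecB) (g : VecB → VecB → C)
    (hGauss : ∀ X Y : VecB, conn (ins X) (ins Y) = ins (connB X Y) + g (S X) Y • N)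
    {p : ℕ} (ω : Form Vec C (p + 1))
    (hMulti : ∀ (Y : Fin (p + 1) → Vec) (i : Fin (p + 1)) (a b : Vec) (c : C),
      ω (Function.update Y i (a + c • b))
        = ω (Function.update Y i a) + c * ω (Function.update Y i b))
    (hAlt : ∀ (Y : Fin (p + 1) → Vec) (i j : Fin (p + 1)), i ≠ j → Y i = Y j → ω Y = 0)
    (X : VecB) :
    covD (fun Z c => act (ins Z) c) connB X (Jstar ins ω)
      = Jstar ins (covD act conn (ins X) ω)
        + oneWedge (fun Y => g (S X) Y) (iNres ins N ω) := by
  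
  classical
  funext Y
  simp only [covD, Jstar, oneWedge, iNres, Pi.add_apply]
  have hins : ∀ (i : Fin (p+1)) (v : VecB),
      (fun j => ins (Function.update Y i v j))
        = Function.update (fun j => ins (Y j)) i (ins v) := by
    intro i v
    funext j
    exact Function.apply_update (fun _ w => ins w) Y i v j
  have hterm : ∀ i : Fin (p+1),
      ω (Function.update (fun j => ins (Y j)) i (conn (ins X) (ins (Y i))))
        = ω (Function.update (fun j => ins (Y j)) i (ins (connB X (Y i))))
          + g (S X) (Y i) * ((-1:C)^(i:ℕ)
              * ω (Fin.cons N fun j => ins (Y (i.succAbove j)))) := by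
    intro i
    rw [hGauss, hMulti, stmt10_key ω hMulti hAlt N]
  simp_rw [hterm, hins]
  rw [Finset.sum_add_distrib]
  have hsw : (∑ i : Fin (p+1), g (S X) (Y i) * ((-1:C)^(i:ℕ)
        * ω (Fin.cons N fun j => ins (Y (i.succAbove j)))))
      = ∑ i : Fin (p+1), (-1:C)^(i:ℕ) * g (S X) (Y i)
          * ω (Fin.cons N fun j => ins (Y (i.succAbove j))) :=
    Finset.sum_congr rfl fun i _ => by ring
  rw [hsw]
  ring
end

section
/- Let M be a Riemannian manifold with boundary, N the inner unit normal, S the shape operator, and ω a smooth p-form on M. Then on ∂M: d^{∂M}(i_N ω) = −i_N(dω) + J*(∇_N ω) − S^{[p]}(J*ω). -/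
open Finset Function

/-- On `∂M`:
`d^{∂M}(i_N ω) = −i_N(dω) + J*(∇_N ω) − S^{[p]}(J*ω)`, where `S(X) = −∇_X N` is the shape
operator, the Gauss formula holds, and `d`, `d^{∂M}` are the exterior derivatives of `M`
and `∂M` (expressed through the respective torsion-free connections). -/
theorem stmt13 {C : Type*} [CommRing C] {Vec VecB : Type*} [AddCommGroup Vec] [Module C Vec]
    [AddCommGroup VecB] [Module C VecB]
    (act : Vec → C → C) (conn : Vec → Vec → Vec) (connB : VecB → VecB → VecB)
    (ins : VecB →ₗ[C] Vec) (N : Vec) (S : VecB → VecB) (g : VecB → VecB → C)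
    (hS : ∀ X : VecB, ins (S X) = -conn (ins X) N)
    (hGauss : ∀ X Y : VecB, conn (ins X) (ins Y) = ins (connB X Y) + g (S X) Y • N)
    {p : ℕ} (ω : Form Vec C (p + 1))
    (hMulti : ∀ (Y : Fin (p + 1) → Vec) (i : Fin (p + 1)) (a b : Vec) (c : C),
      ω (Function.update Y i (a + c • b))
        = ω (Function.update Y i a) + c * ω (Function.update Y i b))
    (hAlt : ∀ (Y : Fin (p + 1) → Vec) (i j : Fin (p + 1)), i ≠ j → Y i = Y j → ω Y = 0) :
    extD (fun Z c => act (ins Z) c) connB (iNres ins N ω)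
      = -iNres ins N (extD act conn ω) + Jstar ins (covD act conn N ω)
          - derext S (Jstar ins ω) := by
  classical
  -- ## Linearity consequences of `hMulti`
  have hzero : ∀ (Z : Fin (p + 1) → Vec) (i : Fin (p + 1)),
      ω (Function.update Z i 0) = 0 := by
    intro Z i
    have h := hMulti Z i 0 0 1
    rw [one_smul, add_zero, one_mul] at h
    linear_combination -h
  have hadd : ∀ (Z : Fin (p + 1) → Vec) (i : Fin (p + 1)) (a b : Vec),
      ω (Function.update Z i (a + b))
        = ω (Function.update Z i a) + ω (Function.update Z i b) := by
    intro Z i a b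
    have h := hMulti Z i a b 1
    rwa [one_smul, one_mul] at h
  have hsmul : ∀ (Z : Fin (p + 1) → Vec) (i : Fin (p + 1)) (c : C) (b : Vec),
      ω (Function.update Z i (c • b)) = c * ω (Function.update Z i b) := by
    intro Z i c b
    have h := hMulti Z i 0 b c
    rwa [zero_add, hzero Z i, zero_add] at h
  have hneg : ∀ (Z : Fin (p + 1) → Vec) (i : Fin (p + 1)) (b : Vec),
      ω (Function.update Z i (-b)) = -ω (Function.update Z i b) := by
    intro Z i b
    have h := hsmul Z i (-1) b
    rw [neg_one_smul] at h
    rw [h]; ring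
  -- ## Antisymmetry: swapping two arguments changes the sign
  have hswap : ∀ (Z : Fin (p + 1) → Vec) (i j : Fin (p + 1)), i ≠ j →
      ω (Function.update (Function.update Z i (Z j)) j (Z i)) = -ω Z := by
    intro Z i j hij
    have h0 : ω (Function.update (Function.update Z i (Z i + Z j)) j (Z i + Z j)) = 0 := by
      apply hAlt _ i j hij
      rw [Function.update_of_ne hij, Function.update_self, Function.update_self]
    rw [hadd] at h0
    rw [Function.update_comm hij (Z i + Z j) (Z i) Z] at h0
    rw [hadd] at h0
    rw [Function.update_comm hij (Z i + Z j) (Z j) Z] at h0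
    rw [hadd] at h0
    have ht1 : ω (Function.update (Function.update Z j (Z i)) i (Z i)) = 0 := by
      apply hAlt _ i j hij
      rw [Function.update_self, Function.update_of_ne hij.symm, Function.update_self]
    have ht4 : ω (Function.update (Function.update Z j (Z j)) i (Z j)) = 0 := by
      apply hAlt _ i j hij
      rw [Function.update_self, Function.update_of_ne hij.symm, Function.update_self]
    have ht3 : ω (Function.update (Function.update Z j (Z j)) i (Z i)) = ω Z := by
      rw [Function.update_eq_self, Function.update_eq_self]
    rw [Function.update_comm hij (Z j) (Z i) Z]
    linear_combination h0 - ht1 - ht4 - ht3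
  -- ## Cycling an argument to the front costs `(-1)^i`
  have hcyc : ∀ (i : Fin (p + 1)) (W : Fin (p + 1) → Vec),
      ω (Fin.cons (W i) (W ∘ i.succAbove)) = (-1 : C) ^ (i : ℕ) * ω W := by
    intro i
    induction i using Fin.induction with
    | zero =>
      intro W
      have hW : Fin.cons (W 0) (W ∘ (0 : Fin (p + 1)).succAbove) = W := by
        funext k
        induction k using Fin.cases with
        | zero => simp
        | succ j => simp
      rw [hW]; simp
    | succ i ih =>
      intro W
      have hne : i.castSucc ≠ i.succ := (Fin.castSucc_lt_succ : i.castSucc < i.succ).ne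
      set W' := Function.update (Function.update W i.castSucc (W i.succ)) i.succ
        (W i.castSucc) with hW'def
      have hkey : (Fin.cons (W i.succ) (W ∘ (i.succ).succAbove) : Fin (p + 1) → Vec)
          = (Fin.cons (W' i.castSucc) (W' ∘ (i.castSucc).succAbove) : Fin (p + 1) → Vec) := by
        funext k
        induction k using Fin.cases with
        | zero =>
          simp only [Fin.cons_zero, hW'def, Function.update_of_ne hne, Function.update_self]
        | succ j =>
          simp only [Fin.cons_succ, Function.comp_apply]
          rcases lt_trichotomy j i with h | h | h
          · have h1 : (i.succ).succAbove j = j.castSucc :=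
              Fin.succAbove_of_castSucc_lt _ _
                (lt_trans (Fin.castSucc_lt_castSucc_iff.2 h) (Fin.castSucc_lt_succ : i.castSucc < i.succ))
            have h2 : (i.castSucc).succAbove j = j.castSucc :=
              Fin.succAbove_of_castSucc_lt _ _ (Fin.castSucc_lt_castSucc_iff.2 h)
            rw [h1, h2, hW'def,
              Function.update_of_ne (Fin.castSucc_lt_succ_iff.2 h.le).ne,
              Function.update_of_ne (Fin.castSucc_inj.ne.2 h.ne)]
          · subst h
            rw [Fin.succAbove_succ_self, Fin.succAbove_castSucc_self, hW'def,
              Function.update_self]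
          · have h1 : (i.succ).succAbove j = j.succ :=
              Fin.succAbove_of_le_castSucc _ _ (Fin.succ_le_castSucc_iff.2 h)
            have h2 : (i.castSucc).succAbove j = j.succ :=
              Fin.succAbove_of_le_castSucc _ _ (Fin.castSucc_le_castSucc_iff.2 h.le)
            rw [h1, h2, hW'def,
              Function.update_of_ne (Fin.succ_inj.ne.2 h.ne'),
              Function.update_of_ne ((Fin.castSucc_lt_succ_iff.2 h.le).ne')]
      have hsw : ω W' = -ω W := hswap W i.castSucc i.succ hne
      rw [hkey, ih W', hsw, Fin.coe_castSucc, Fin.val_succ, pow_succ]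
      ring
  have hsq : ∀ n : ℕ, (-1 : C) ^ n * (-1 : C) ^ n = 1 := by
    intro n
    rw [← pow_add, ← two_mul, pow_mul, neg_one_sq, one_pow]
  -- ## pushing `ins` through `update`
  have hinsupd : ∀ {q : ℕ} (W : Fin q → VecB) (j : Fin q) (v : VecB),
      (fun k => ins (Function.update W j v k))
        = Function.update (fun k => ins (W k)) j (ins v) := by
    intro q W j v
    funext k
    rcases eq_or_ne k j with rfl | hk
    · simp
    · rw [Function.update_of_ne hk, Function.update_of_ne hk]
  -- ## main computation
  funext Y
  -- Gauss formula: the normal correction vanishes by alternation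
  have key1 : ∀ (i : Fin (p + 1)) (j : Fin p),
      ω (Function.update (Fin.cons N fun k => ins (Y (i.succAbove k))) j.succ
          (ins (connB (Y i) (Y (i.succAbove j)))))
        = ω (Function.update (Fin.cons N fun k => ins (Y (i.succAbove k))) j.succ
            (conn (ins (Y i)) (ins (Y (i.succAbove j))))) := by
    intro i j
    have hg : ins (connB (Y i) (Y (i.succAbove j)))
        = conn (ins (Y i)) (ins (Y (i.succAbove j)))
            + (-(g (S (Y i)) (Y (i.succAbove j)))) • N := by
      rw [neg_smul, hGauss]
      abel
    rw [hg, hMulti]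
    have hz : ω (Function.update (Fin.cons N fun k => ins (Y (i.succAbove k))) j.succ N)
        = 0 := by
      apply hAlt _ 0 j.succ (Fin.succ_ne_zero j).symm
      rw [Function.update_of_ne (Fin.succ_ne_zero j).symm, Fin.cons_zero,
        Function.update_self]
    rw [hz, mul_zero, add_zero]
  -- LHS in normal form
  have hL : extD (fun Z c => act (ins Z) c) connB (iNres ins N ω) Y
      = ∑ i : Fin (p + 1), (-1 : C) ^ (i : ℕ) *
          (act (ins (Y i)) (ω (Fin.cons N fun k => ins (Y (i.succAbove k))))
            - ∑ j : Fin p, ω (Function.update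
                (Fin.cons N fun k => ins (Y (i.succAbove k))) j.succ
                (conn (ins (Y i)) (ins (Y (i.succAbove j)))))) := by
    simp only [extD, covD, iNres]
    apply Finset.sum_congr rfl
    intro i _
    congr 2
    apply Finset.sum_congr rfl
    intro j _
    rw [hinsupd, Fin.cons_update, key1]
  -- the tuple appearing in the tail of `i_N (dω)`
  have hcomp : ∀ i : Fin (p + 1),
      (fun j : Fin (p + 1) => (Fin.cons N (fun k => ins (Y k)) : Fin (p + 2) → Vec) ((i.succ).succAbove j))
        = (Fin.cons N (fun k => ins (Y (i.succAbove k))) : Fin (p + 1) → Vec) := by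
    intro i
    funext j
    induction j using Fin.cases with
    | zero => simp
    | succ m => simp [Fin.succ_succAbove_succ]
  -- RHS first piece
  have hR1 : iNres ins N (extD act conn ω) Y
      = covD act conn N ω (fun k => ins (Y k))
        + ∑ i : Fin (p + 1), (-1 : C) ^ ((i : ℕ) + 1) *
            (act (ins (Y i)) (ω (Fin.cons N fun k => ins (Y (i.succAbove k))))
              - ω (Fin.cons (conn (ins (Y i)) N) (fun k => ins (Y (i.succAbove k))))
              - ∑ j : Fin p, ω (Function.update
                  (Fin.cons N fun k => ins (Y (i.succAbove k))) j.succ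
                  (conn (ins (Y i)) (ins (Y (i.succAbove j)))))) := by
    show extD act conn ω (Fin.cons N fun k => ins (Y k)) = _
    rw [extD, Fin.sum_univ_succ]
    congr 1
    · simp
    · apply Finset.sum_congr rfl
      intro i _
      rw [hcomp i, Fin.cons_succ, Fin.val_succ]
      congr 1
      rw [covD, Fin.sum_univ_succ, Fin.cons_zero, Fin.update_cons_zero]
      simp only [Fin.cons_succ]
      ring
  have hR2 : Jstar ins (covD act conn N ω) Y = covD act conn N ω (fun k => ins (Y k)) := rfl
  have hR3 : derext S (Jstar ins ω) Y
      = -∑ i : Fin (p + 1),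
          ω (Function.update (fun k => ins (Y k)) i (conn (ins (Y i)) N)) := by
    rw [derext, ← Finset.sum_neg_distrib]
    apply Finset.sum_congr rfl
    intro i _
    show ω (fun j => ins (Function.update Y i (S (Y i)) j)) = _
    rw [hinsupd, hS, hneg]
  have hC : ∀ i : Fin (p + 1),
      ω (Fin.cons (conn (ins (Y i)) N) (fun k => ins (Y (i.succAbove k))))
        = (-1 : C) ^ (i : ℕ) *
            ω (Function.update (fun k => ins (Y k)) i (conn (ins (Y i)) N)) := by
    intro i
    have h := hcyc i (Function.update (fun k => ins (Y k)) i (conn (ins (Y i)) N))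
    have e : Fin.cons ((Function.update (fun k => ins (Y k)) i (conn (ins (Y i)) N)) i)
        ((Function.update (fun k => ins (Y k)) i (conn (ins (Y i)) N)) ∘ i.succAbove)
        = (Fin.cons (conn (ins (Y i)) N) (fun k => ins (Y (i.succAbove k))) : Fin (p + 1) → Vec) := by
      funext k
      induction k using Fin.cases with
      | zero => rw [Fin.cons_zero, Fin.cons_zero, Function.update_self]
      | succ m =>
        rw [Fin.cons_succ, Fin.cons_succ, Function.comp_apply,
          Function.update_of_ne (Fin.succAbove_ne i m)]
    rw [e] at h
    exact h
  show extD (fun Z c => act (ins Z) c) connB (iNres ins N ω) Y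
      = -iNres ins N (extD act conn ω) Y + Jstar ins (covD act conn N ω) Y
          - derext S (Jstar ins ω) Y
  rw [hL, hR1, hR2, hR3]
  have hsum : ∑ i : Fin (p + 1), (-1 : C) ^ ((i : ℕ) + 1) *
        (act (ins (Y i)) (ω (Fin.cons N fun k => ins (Y (i.succAbove k))))
          - ω (Fin.cons (conn (ins (Y i)) N) (fun k => ins (Y (i.succAbove k))))
          - ∑ j : Fin p, ω (Function.update
              (Fin.cons N fun k => ins (Y (i.succAbove k))) j.succ
              (conn (ins (Y i)) (ins (Y (i.succAbove j))))))
      = ∑ i : Fin (p + 1),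
          (ω (Function.update (fun k => ins (Y k)) i (conn (ins (Y i)) N))
            - (-1 : C) ^ (i : ℕ) *
              (act (ins (Y i)) (ω (Fin.cons N fun k => ins (Y (i.succAbove k))))
                - ∑ j : Fin p, ω (Function.update
                    (Fin.cons N fun k => ins (Y (i.succAbove k))) j.succ
                    (conn (ins (Y i)) (ins (Y (i.succAbove j))))))) := by
    apply Finset.sum_congr rfl
    intro i _
    rw [hC i, pow_succ]
    linear_combination
      (ω (Function.update (fun k => ins (Y k)) i (conn (ins (Y i)) N))) * hsq (i : ℕ)
  rw [hsum, Finset.sum_sub_distrib]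
  ring
end
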